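/- Let F be a nonzero polynomial with nonnegative real coefficients and F(0) = 0, let H(z) = Σ_{n≥0} h_n z^n be a power series with nonnegative real coefficients whose radius of convergence r(H) satisfies 0 < r(H) < ∞, and let Q(z) = H(F(z)) (a well-defined formal power series, since F has zero constant term). Then the radius of convergence r(Q) of Q satisfies F(r(Q)) = r(H). -/

import Mathlib

open Filter

/-- The radius of convergence `r(A) = (limsup |a_n|^{1/n})⁻¹ ∈ [0, ∞]` of a real power
series with coefficient sequence `a`. -/
noncomputable def radius (a : ℕ → ℝ) : ENNReal :=
  (Filter.limsup (fun n : ℕ => ENNReal.ofReal |a n| ^ ((n : ℝ)⁻¹)) Filter.atTop)⁻¹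

lemma summable_iff_ne_top {f : ℕ → ℝ} (hf : ∀ n, 0 ≤ f n) :
    Summable f ↔ (∑' n, ENNReal.ofReal (f n)) ≠ ⊤ := by
  have h1 : Summable f ↔ Summable (fun n => ((f n).toNNReal : ℝ)) :=
    summable_congr fun n => (Real.coe_toNNReal _ (hf n)).symm
  rw [h1, NNReal.summable_coe, ← ENNReal.tsum_coe_ne_top_iff_summable]
  rfl

lemma le_radius_of_summable {a : ℕ → ℝ} {t : ℝ} (ha : ∀ n, 0 ≤ a n) (ht : 0 ≤ t)
    (hs : Summable (fun n => a n * t ^ n)) : ENNReal.ofReal t ≤ radius a := by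
  rcases eq_or_lt_of_le ht with rfl | ht
  · simp
  have h0 : Tendsto (fun n => a n * t ^ n) atTop (nhds 0) := hs.tendsto_atTop_zero
  have hev : ∀ᶠ n in atTop, a n * t ^ n ≤ 1 := h0.eventually_le_const one_pos
  have hev2 : ∀ᶠ n : ℕ in atTop,
      ENNReal.ofReal |a n| ^ ((n : ℝ)⁻¹) ≤ (ENNReal.ofReal t)⁻¹ := by
    filter_upwards [hev, eventually_ge_atTop 1] with n hn hn1
    have htn : (0:ℝ) < t ^ n := pow_pos ht n
    have han : a n ≤ (t ^ n)⁻¹ := by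
      rw [← one_div]; exact (le_div_iff₀ htn).mpr hn
    have h2 : ENNReal.ofReal |a n| ≤ ((ENNReal.ofReal t)⁻¹) ^ n := by
      rw [abs_of_nonneg (ha n), ← ENNReal.inv_pow, ← ENNReal.ofReal_pow ht.le,
        ← ENNReal.ofReal_inv_of_pos htn]
      exact ENNReal.ofReal_le_ofReal han
    calc ENNReal.ofReal |a n| ^ ((n : ℝ)⁻¹)
        ≤ (((ENNReal.ofReal t)⁻¹) ^ n) ^ ((n : ℝ)⁻¹) :=
          ENNReal.rpow_le_rpow h2 (by positivity)
      _ = (ENNReal.ofReal t)⁻¹ :=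
          ENNReal.pow_rpow_inv_natCast (by omega) _
  have hlim : Filter.limsup (fun n : ℕ => ENNReal.ofReal |a n| ^ ((n : ℝ)⁻¹)) atTop
      ≤ (ENNReal.ofReal t)⁻¹ := limsup_le_of_le (by isBoundedDefault) hev2
  rw [radius] at *
  calc ENNReal.ofReal t = ((ENNReal.ofReal t)⁻¹)⁻¹ := (inv_inv _).symm
    _ ≤ _ := ENNReal.inv_le_inv.mpr hlim

lemma summable_abs_of_lt_radius {a : ℕ → ℝ} {t : ℝ} (ht : 0 ≤ t)
    (hlt : ENNReal.ofReal t < radius a) : Summable (fun n => |a n| * t ^ n) := by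
  rcases eq_or_lt_of_le ht with rfl | ht
  · apply summable_of_ne_finset_zero (s := {0})
    intro n hn
    simp [zero_pow (by simpa using hn)]
  rw [radius, ENNReal.lt_inv_iff_lt_inv] at hlt
  obtain ⟨u, hu0, hLu, hut⟩ := ENNReal.lt_iff_exists_real_btwn.mp hlt
  have hupos : 0 < u := by
    by_contra hc
    push_neg at hc
    rw [ENNReal.ofReal_eq_zero.mpr hc] at hLu
    simp at hLu
  have hut' : u * t < 1 := by
    rw [← ENNReal.ofReal_inv_of_pos ht] at hut
    have h4 : u < t⁻¹ := (ENNReal.ofReal_lt_ofReal_iff (by positivity)).mp hut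
    have := mul_lt_mul_of_pos_right h4 ht
    rwa [inv_mul_cancel₀ ht.ne'] at this
  have hev : ∀ᶠ n : ℕ in atTop, ENNReal.ofReal |a n| ^ ((n : ℝ)⁻¹) < ENNReal.ofReal u :=
    eventually_lt_of_limsup_lt hLu
  have hev2 : ∀ᶠ n : ℕ in atTop, |a n| * t ^ n ≤ (u * t) ^ n := by
    filter_upwards [hev, eventually_ge_atTop 1] with n hn hn1
    have h2 : ENNReal.ofReal |a n| < ENNReal.ofReal (u ^ n) := by
      calc ENNReal.ofReal |a n|
          = (ENNReal.ofReal |a n| ^ ((n : ℝ)⁻¹)) ^ n :=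
            (ENNReal.rpow_inv_natCast_pow (by omega) _).symm
        _ < ENNReal.ofReal u ^ n := ENNReal.pow_lt_pow_left (by omega) hn
        _ = ENNReal.ofReal (u ^ n) := (ENNReal.ofReal_pow hu0 n).symm
    have h3 : |a n| ≤ u ^ n :=
      ((ENNReal.ofReal_lt_ofReal_iff (by positivity)).mp h2).le
    rw [mul_pow]
    exact mul_le_mul_of_nonneg_right h3 (by positivity)
  have hgeo : Summable (fun n : ℕ => (u * t) ^ n) :=
    summable_geometric_of_lt_one (by positivity) hut'
  refine summable_of_isBigO_nat hgeo (Asymptotics.isBigO_iff.mpr ⟨1, ?_⟩)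
  filter_upwards [hev2] with n hn
  have h1 : (0:ℝ) ≤ |a n| * t ^ n := by positivity
  have h2 : (0:ℝ) ≤ (u * t) ^ n := by positivity
  rw [one_mul, Real.norm_eq_abs, Real.norm_eq_abs, abs_of_nonneg h1, abs_of_nonneg h2]
  exact hn

lemma coeff_pow_nonneg {F : Polynomial ℝ} (hF : ∀ n, 0 ≤ F.coeff n) (k n : ℕ) :
    0 ≤ (F ^ k).coeff n := by
  induction k generalizing n with
  | zero => rw [pow_zero, Polynomial.coeff_one]; split <;> norm_num
  | succ k ih =>
    rw [pow_succ, Polynomial.coeff_mul]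
    exact Finset.sum_nonneg fun p _ => mul_nonneg (ih p.1) (hF p.2)

lemma coeff_pow_eq_zero {F : Polynomial ℝ} (hF : F.coeff 0 = 0) {k n : ℕ} (hnk : n < k) :
    (F ^ k).coeff n = 0 := by
  obtain ⟨G, hG⟩ := pow_dvd_pow_of_dvd (Polynomial.X_dvd_iff.mpr hF) k
  rw [hG, mul_comm, Polynomial.coeff_mul_X_pow', if_neg (by omega)]

lemma eval_nonneg' {F : Polynomial ℝ} (hF : ∀ n, 0 ≤ F.coeff n) {t : ℝ} (ht : 0 ≤ t) :
    0 ≤ F.eval t := by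
  rw [Polynomial.eval_eq_sum_range]
  exact Finset.sum_nonneg fun i _ => mul_nonneg (hF i) (pow_nonneg ht i)

lemma tsum_key (F : Polynomial ℝ) (hFcoeff : ∀ n : ℕ, 0 ≤ F.coeff n)
    (hFconst : F.coeff 0 = 0) (h : ℕ → ℝ) (hh : ∀ n : ℕ, 0 ≤ h n) {t : ℝ} (ht : 0 ≤ t) :
    (∑' n : ℕ, ENNReal.ofReal ((∑ k ∈ Finset.range (n+1), h k * (F^k).coeff n) * t ^ n))
      = ∑' k : ℕ, ENNReal.ofReal (h k * F.eval t ^ k) := by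
  have step1 : ∀ n : ℕ,
      ENNReal.ofReal ((∑ k ∈ Finset.range (n+1), h k * (F^k).coeff n) * t ^ n)
      = ∑' k : ℕ, ENNReal.ofReal (h k * (F^k).coeff n * t ^ n) := by
    intro n
    rw [Finset.sum_mul, ENNReal.ofReal_sum_of_nonneg (fun k _ =>
      mul_nonneg (mul_nonneg (hh k) (coeff_pow_nonneg hFcoeff k n)) (pow_nonneg ht n))]
    refine (tsum_eq_sum fun k hk => ?_).symm
    rw [coeff_pow_eq_zero hFconst (by simpa using hk)]
    simp
  calc (∑' n : ℕ, ENNReal.ofReal ((∑ k ∈ Finset.range (n+1), h k * (F^k).coeff n) * t ^ n))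
      = ∑' (n : ℕ) (k : ℕ), ENNReal.ofReal (h k * (F^k).coeff n * t ^ n) :=
        tsum_congr step1
    _ = ∑' (k : ℕ) (n : ℕ), ENNReal.ofReal (h k * (F^k).coeff n * t ^ n) :=
        ENNReal.tsum_comm
    _ = ∑' k : ℕ, ENNReal.ofReal (h k * F.eval t ^ k) := by
        refine tsum_congr fun k => ?_
        have e1 : ∀ n : ℕ, ENNReal.ofReal (h k * (F^k).coeff n * t ^ n)
            = ENNReal.ofReal (h k) * ENNReal.ofReal ((F^k).coeff n * t ^ n) := fun n => by
          rw [mul_assoc, ENNReal.ofReal_mul (hh k)]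
        rw [tsum_congr e1, ENNReal.tsum_mul_left]
        have e2 : (∑' n : ℕ, ENNReal.ofReal ((F^k).coeff n * t ^ n))
            = ENNReal.ofReal ((F^k).eval t) := by
          rw [tsum_eq_sum (s := Finset.range ((F^k).natDegree + 1)) (fun n hn => by
            rw [Polynomial.coeff_eq_zero_of_natDegree_lt (by simpa using hn)]; simp)]
          rw [← ENNReal.ofReal_sum_of_nonneg (fun n _ =>
            mul_nonneg (coeff_pow_nonneg hFcoeff k n) (pow_nonneg ht n)),
            ← Polynomial.eval_eq_sum_range]
        rw [e2, Polynomial.eval_pow, ← ENNReal.ofReal_mul (hh k)]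

/-- Lemma I of the unrooting argument: if `F ≠ 0` is a polynomial with nonnegative
coefficients and `F(0) = 0`, `H` is a power series with nonnegative coefficients and
`0 < r(H) < ∞`, and `Q(z) = H(F(z))` (formal composition, whose `n`-th coefficient is
`Σ_{k≤n} h_k·[z^n]F^k`), then `F(r(Q)) = r(H)`; in particular `r(Q)` is finite. -/
theorem radius_comp_polynomial_eq (F : Polynomial ℝ) (hF0 : F ≠ 0)
    (hFcoeff : ∀ n : ℕ, 0 ≤ F.coeff n) (hFconst : F.coeff 0 = 0)
    (h : ℕ → ℝ) (hh : ∀ n : ℕ, 0 ≤ h n)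
    (hrH_pos : 0 < radius h) (hrH_fin : radius h < ⊤) :
    ∃ x : ℝ, 0 ≤ x ∧
      radius (fun n : ℕ => ∑ k ∈ Finset.range (n + 1), h k * (F ^ k).coeff n)
        = ENNReal.ofReal x ∧
      ENNReal.ofReal (F.eval x) = radius h := by
  classical
  set q : ℕ → ℝ := fun n => ∑ k ∈ Finset.range (n + 1), h k * (F ^ k).coeff n with hqdef
  have hqnn : ∀ n, 0 ≤ q n := fun n => Finset.sum_nonneg fun k _ =>
    mul_nonneg (hh k) (coeff_pow_nonneg hFcoeff k n)
  set R : ℝ := (radius h).toReal with hRdef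
  have hR0 : 0 < R := ENNReal.toReal_pos hrH_pos.ne' hrH_fin.ne
  have hRr : ENNReal.ofReal R = radius h := ENNReal.ofReal_toReal hrH_fin.ne
  obtain ⟨d, hd⟩ : ∃ d, F.coeff d ≠ 0 := by
    by_contra hc; push_neg at hc
    exact hF0 (Polynomial.ext fun n => by simp [hc n])
  have hd1 : d ≠ 0 := fun h0 => hd (h0 ▸ hFconst)
  have hdpos : 0 < F.coeff d := (hFcoeff d).lt_of_ne (Ne.symm hd)
  have hdle : d ≤ F.natDegree := Polynomial.le_natDegree_of_ne_zero hd
  have hmono : ∀ s u : ℝ, 0 ≤ s → s < u → F.eval s < F.eval u := by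
    intro s u hs hsu
    rw [Polynomial.eval_eq_sum_range, Polynomial.eval_eq_sum_range]
    refine Finset.sum_lt_sum (fun i _ => ?_) ⟨d, Finset.mem_range.mpr (by omega), ?_⟩
    · exact mul_le_mul_of_nonneg_left (pow_le_pow_left₀ hs hsu.le i) (hFcoeff i)
    · exact mul_lt_mul_of_pos_left (pow_lt_pow_left₀ hsu hs hd1) hdpos
  set t₀ : ℝ := max 1 (R / F.coeff d) with ht₀def
  have ht₀1 : (1:ℝ) ≤ t₀ := le_max_left _ _
  have ht₀0 : (0:ℝ) ≤ t₀ := by linarith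
  have hRt₀ : R ≤ F.eval t₀ := by
    have h1 : F.coeff d * t₀ ^ d ≤ F.eval t₀ := by
      rw [Polynomial.eval_eq_sum_range]
      exact Finset.single_le_sum (f := fun i => F.coeff i * t₀ ^ i)
        (fun i _ => mul_nonneg (hFcoeff i) (pow_nonneg ht₀0 i))
        (Finset.mem_range.mpr (by omega))
    have h2 : t₀ ≤ t₀ ^ d := le_self_pow₀ ht₀1 hd1
    have h3 : R / F.coeff d ≤ t₀ := le_max_right _ _
    calc R = F.coeff d * (R / F.coeff d) := by field_simp
      _ ≤ F.coeff d * t₀ := by nlinarith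
      _ ≤ F.coeff d * t₀ ^ d := by nlinarith
      _ ≤ F.eval t₀ := h1
  have hcont : ContinuousOn (fun s => F.eval s) (Set.Icc 0 t₀) :=
    (Polynomial.continuous F).continuousOn
  have hmem : R ∈ Set.Icc (F.eval 0) (F.eval t₀) := by
    constructor
    · rw [← Polynomial.coeff_zero_eq_eval_zero, hFconst]; exact hR0.le
    · exact hRt₀
  obtain ⟨x, hxmem, hFx⟩ := intermediate_value_Icc ht₀0 hcont hmem
  have hx0 : 0 ≤ x := hxmem.1
  have hFx' : F.eval x = R := hFx
  refine ⟨x, hx0, ?_, by rw [hFx', hRr]⟩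
  apply le_antisymm
  · -- radius q ≤ ofReal x
    by_contra hc
    push_neg at hc
    obtain ⟨t, ht0, hxt, htq⟩ := ENNReal.lt_iff_exists_real_btwn.mp hc
    have hxt' : x < t := by
      by_contra hc2; push_neg at hc2
      exact absurd hxt (not_lt.mpr (ENNReal.ofReal_le_ofReal hc2))
    have hsq : Summable (fun n => |q n| * t ^ n) := summable_abs_of_lt_radius ht0 htq
    have hsq' : Summable (fun n => q n * t ^ n) :=
      hsq.congr fun n => by rw [abs_of_nonneg (hqnn n)]
    have hfin : (∑' n : ℕ, ENNReal.ofReal (q n * t ^ n)) ≠ ⊤ :=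
      (summable_iff_ne_top (fun n => mul_nonneg (hqnn n) (pow_nonneg ht0 n))).mp hsq'
    rw [hqdef] at hfin
    rw [tsum_key F hFcoeff hFconst h hh ht0] at hfin
    have hevalt : 0 ≤ F.eval t := eval_nonneg' hFcoeff ht0
    have hsh : Summable (fun k => h k * F.eval t ^ k) :=
      (summable_iff_ne_top (fun k => mul_nonneg (hh k) (pow_nonneg hevalt k))).mpr hfin
    have hle : ENNReal.ofReal (F.eval t) ≤ radius h :=
      le_radius_of_summable hh hevalt hsh
    have hRlt : R < F.eval t := hFx' ▸ hmono x t hx0 hxt'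
    have : ENNReal.ofReal R < ENNReal.ofReal (F.eval t) :=
      (ENNReal.ofReal_lt_ofReal_iff (lt_trans hR0 hRlt)).mpr hRlt
    rw [hRr] at this
    exact absurd (lt_of_lt_of_le this hle) (lt_irrefl _)
  · -- ofReal x ≤ radius q
    by_contra hc
    push_neg at hc
    obtain ⟨t, ht0, hqt, htx⟩ := ENNReal.lt_iff_exists_real_btwn.mp hc
    have htx' : t < x := by
      by_contra hc2; push_neg at hc2
      exact absurd htx (not_lt.mpr (ENNReal.ofReal_le_ofReal hc2))
    have hFt : F.eval t < R := hFx' ▸ hmono t x ht0 htx'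
    have hevalt : 0 ≤ F.eval t := eval_nonneg' hFcoeff ht0
    have hlt : ENNReal.ofReal (F.eval t) < radius h := by
      rw [← hRr]; exact (ENNReal.ofReal_lt_ofReal_iff hR0).mpr hFt
    have hsh : Summable (fun k => |h k| * F.eval t ^ k) :=
      summable_abs_of_lt_radius hevalt hlt
    have hsh' : Summable (fun k => h k * F.eval t ^ k) :=
      hsh.congr fun k => by rw [abs_of_nonneg (hh k)]
    have hfin : (∑' k : ℕ, ENNReal.ofReal (h k * F.eval t ^ k)) ≠ ⊤ :=
      (summable_iff_ne_top (fun k => mul_nonneg (hh k) (pow_nonneg hevalt k))).mp hsh'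
    rw [← tsum_key F hFcoeff hFconst h hh ht0] at hfin
    have hsq : Summable (fun n => q n * t ^ n) := by
      rw [hqdef]
      exact (summable_iff_ne_top (fun n => mul_nonneg
        (Finset.sum_nonneg fun k _ => mul_nonneg (hh k) (coeff_pow_nonneg hFcoeff k n))
        (pow_nonneg ht0 n))).mpr hfin
    have hle : ENNReal.ofReal t ≤ radius q := le_radius_of_summable hqnn ht0 hsq
    exact absurd (lt_of_le_of_lt hle hqt) (lt_irrefl _)
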